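/- arXiv:1209.1796 — 3 statements merged into one kernel-verified Lean document; each statement's English description precedes it below -/
import Mathlib

section
/- Let E be a real Banach space and B ⊆ E a nonempty closed proper subset. Then there exists a point a* ∈ B, an open set U ⊆ E containing a*, and a convex closed set 𝔛 ⊆ E with nonempty interior such that the cone C = {a* + t(x - a*) | x ∈ 𝔛, t ≥ 0} satisfies U ∩ C ∩ B = {a*}. -/
open Metric Filter

/-- An Ekeland-variational-principle style lemma for the distance to a point `c`,
with slope `1/5`. -/
theorem ekeland_dist_aux {E : Type*} [NormedAddCommGroup E] [CompleteSpace E]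
    (B : Set E) (hBne : B.Nonempty) (hBclosed : IsClosed B) (c : E) :
    ∃ a ∈ B, ∀ y ∈ B, y ≠ a → ‖a - c‖ - (1/5) * ‖y - a‖ < ‖y - c‖ := by
  classical
  obtain ⟨a0, ha0⟩ := hBne
  set f : E → ℝ := fun y => ‖y - c‖ with hf
  set S : E → Set E := fun a => {y | y ∈ B ∧ f y + (1/5) * ‖y - a‖ ≤ f a} with hS
  have selfmem : ∀ a ∈ B, a ∈ S a := by
    intro a ha
    refine ⟨ha, ?_⟩
    simp
  have trans : ∀ {a y z : E}, y ∈ S a → z ∈ S y → z ∈ S a := by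
    rintro a y z ⟨hyB, hy⟩ ⟨hzB, hz⟩
    refine ⟨hzB, ?_⟩
    have h3 := norm_add_le (z - y) (y - a)
    rw [sub_add_sub_cancel] at h3
    linarith
  have bdd : ∀ a : E, BddBelow (Set.range fun z : S a => f z.1) := by
    intro a
    refine ⟨0, ?_⟩
    rintro _ ⟨z, rfl⟩
    exact norm_nonneg _
  set mInf : E → ℝ := fun a => ⨅ z : S a, f z.1 with hm
  have mInf_le : ∀ (a : E) (y : E), y ∈ S a → mInf a ≤ f y := by
    intro a y hy
    exact ciInf_le (bdd a) (⟨y, hy⟩ : S a)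
  set α := {x : E // x ∈ B}
  have key : ∀ (n : ℕ) (a : α), ∃ b : α, (b : E) ∈ S a ∧ f b < mInf (a : E) + (1/2)^n := by
    intro n a
    haveI : Nonempty (S (a : E)) := ⟨⟨a, selfmem a a.2⟩⟩
    have hlt : mInf (a : E) < mInf (a : E) + (1/2)^n := by
      have : (0:ℝ) < (1/2)^n := by positivity
      linarith
    obtain ⟨⟨z, hz⟩, hzlt⟩ := exists_lt_of_ciInf_lt hlt
    exact ⟨⟨z, hz.1⟩, hz, hzlt⟩
  choose g hg1 hg2 using key
  set u : ℕ → α := fun n => Nat.rec (motive := fun _ => α) ⟨a0, ha0⟩ (fun k prev => g k prev) n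
    with hu
  have hu0 : u 0 = ⟨a0, ha0⟩ := rfl
  have husucc : ∀ n, u (n+1) = g n (u n) := fun n => rfl
  have hstep : ∀ n, ((u (n+1) : E)) ∈ S (u n) := by
    intro n; rw [husucc]; exact hg1 n (u n)
  have hmono : Antitone fun n => f (u n : E) := by
    apply antitone_nat_of_succ_le
    intro n
    have := (hstep n).2
    have h0 := norm_nonneg ((u (n+1) : E) - (u n : E))
    linarith
  have hbddL : BddBelow (Set.range fun n => f (u n : E)) := by
    refine ⟨0, ?_⟩; rintro _ ⟨n, rfl⟩; exact norm_nonneg _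
  set L : ℝ := ⨅ n, f (u n : E) with hL
  have hL_le : ∀ n, L ≤ f (u n : E) := fun n => ciInf_le hbddL n
  have htendsL : Tendsto (fun n => f (u n : E)) atTop (nhds L) :=
    tendsto_atTop_ciInf hmono hbddL
  have hchain : ∀ n m, n ≤ m → ((u m : E)) ∈ S (u n) := by
    intro n m hnm
    induction m, hnm using Nat.le_induction with
    | base => exact selfmem _ (u n).2
    | succ m hnm ih => exact trans ih (hstep m)
  have hcauchy : CauchySeq (fun n => (u n : E)) := by
    apply cauchySeq_of_le_tendsto_0 (fun N => 5 * (f (u N : E) - L))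
    · intro n m N hn hm
      have main : ∀ p q, N ≤ p → p ≤ q → dist (u p : E) (u q : E) ≤ 5 * (f (u N : E) - L) := by
        intro p q hNp hpq
        have h1 := (hchain p q hpq).2
        have h2 : f (u p : E) ≤ f (u N : E) := hmono hNp
        have h3 : L ≤ f (u q : E) := hL_le q
        rw [dist_eq_norm, norm_sub_rev]
        linarith
      rcases le_total n m with h | h
      · exact main n m hn h
      · rw [dist_comm]; exact main m n hm h
    · have : Tendsto (fun N => 5 * (f (u N : E) - L)) atTop (nhds (5 * (L - L))) :=
        (htendsL.sub_const L).const_mul 5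
      simpa using this
  obtain ⟨a, hatend⟩ := cauchySeq_tendsto_of_complete hcauchy
  have haB : a ∈ B := hBclosed.mem_of_tendsto hatend (Filter.Eventually.of_forall fun n => (u n).2)
  have haS : ∀ n, a ∈ S (u n : E) := by
    intro n
    refine ⟨haB, ?_⟩
    have hT : Tendsto (fun m => f (u m : E) + (1/5) * ‖(u m : E) - (u n : E)‖) atTop
        (nhds (f a + (1/5) * ‖a - (u n : E)‖)) := by
      exact ((hatend.sub_const c).norm).add (((hatend.sub_const _).norm).const_mul (1/5))
    refine le_of_tendsto hT ?_
    filter_upwards [eventually_ge_atTop n] with m hm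
    exact (hchain n m hm).2
  have hfaL : f a ≤ L := by
    apply le_ciInf
    intro n
    have := (haS n).2
    have h0 := norm_nonneg (a - (u n : E))
    linarith
  refine ⟨a, haB, ?_⟩
  intro y hyB hyne
  by_contra hcon
  push_neg at hcon
  have hySa : y ∈ S a := ⟨hyB, by linarith⟩
  have hyL : L ≤ f y := by
    have hseq : ∀ n : ℕ, L - (1/2:ℝ)^n ≤ f y := by
      intro n
      have h1 : mInf (u n : E) ≤ f y := mInf_le _ _ (trans (haS n) hySa)
      have h2 := hg2 n (u n)
      have h3 := hL_le (n+1)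
      rw [husucc] at h3
      linarith
    have hT : Tendsto (fun n : ℕ => L - (1/2:ℝ)^n) atTop (nhds L) := by
      have : Tendsto (fun n : ℕ => (1/2:ℝ)^n) atTop (nhds 0) := by
        apply tendsto_pow_atTop_nhds_zero_of_lt_one <;> norm_num
      simpa using tendsto_const_nhds.sub this
    exact le_of_tendsto' hT hseq
  have h5 := hySa.2
  have : ‖y - a‖ ≤ 0 := by linarith
  exact hyne (by simpa [sub_eq_zero] using norm_le_zero_iff.mp this)

theorem exists_cone_touching_closed_set {E : Type*} [NormedAddCommGroup E]
    [NormedSpace ℝ E] [CompleteSpace E]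
    (B : Set E) (hBne : B.Nonempty) (hBclosed : IsClosed B) (hBproper : B ≠ Set.univ) :
    ∃ a_star ∈ B, ∃ U : Set E, IsOpen U ∧ a_star ∈ U ∧
      ∃ 𝔛 : Set E, Convex ℝ 𝔛 ∧ IsClosed 𝔛 ∧ (interior 𝔛).Nonempty ∧
        U ∩ {y : E | ∃ x ∈ 𝔛, ∃ t : ℝ, 0 ≤ t ∧ y = a_star + t • (x - a_star)} ∩ B
          = {a_star} := by
  obtain ⟨c, hc⟩ : ∃ c, c ∉ B := by
    by_contra h
    push_neg at h
    exact hBproper (Set.eq_univ_of_forall h)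
  set d : ℝ := Metric.infDist c B with hd_def
  have hd : 0 < d := by
    rw [hd_def]
    rwa [← hBclosed.notMem_iff_infDist_pos hBne]
  obtain ⟨a, haB, hek⟩ := ekeland_dist_aux B hBne hBclosed c
  have hdac : d ≤ ‖a - c‖ := by
    have := Metric.infDist_le_dist_of_mem (x := c) haB
    rwa [dist_eq_norm, norm_sub_rev] at this
  refine ⟨a, haB, Metric.ball a (d/2), Metric.isOpen_ball, Metric.mem_ball_self (by positivity),
    Metric.closedBall c (d/2), convex_closedBall _ _, Metric.isClosed_closedBall, ?_, ?_⟩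
  · exact ⟨c, Metric.ball_subset_interior_closedBall (Metric.mem_ball_self (by positivity))⟩
  · apply Set.eq_singleton_iff_unique_mem.mpr
    constructor
    · exact ⟨⟨Metric.mem_ball_self (by positivity),
        ⟨c, Metric.mem_closedBall_self (by positivity), 0, le_refl 0, by simp⟩⟩, haB⟩
    · rintro y ⟨⟨hyU, x, hx, t, ht0, hyeq⟩, hyB⟩
      by_contra hyne
      subst hyeq
      have hlt := hek _ hyB hyne
      have hynorm : ‖a + t • (x - a) - a‖ = t * ‖x - a‖ := by
        rw [add_sub_cancel_left, norm_smul, Real.norm_of_nonneg ht0]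
      have hxc : ‖x - c‖ ≤ d/2 := by
        have := Metric.mem_closedBall.mp hx
        rwa [dist_eq_norm] at this
      have hxa_ub : ‖x - a‖ ≤ ‖x - c‖ + ‖a - c‖ := by
        have h3 := norm_add_le (x - c) (c - a)
        rw [sub_add_sub_cancel] at h3
        rwa [norm_sub_rev c a] at h3
      have hxa_lb : d/2 ≤ ‖x - a‖ := by
        have h3 := norm_add_le (a - x) (x - c)
        rw [sub_add_sub_cancel] at h3
        rw [norm_sub_rev a x] at h3
        linarith
      have hyU' : t * ‖x - a‖ < d/2 := by
        have := Metric.mem_ball.mp hyU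
        rw [dist_eq_norm, hynorm] at this
        exact this
      have ht0' : 0 < t := by
        rcases ht0.eq_or_lt with h | h
        · exfalso; apply hyne; rw [← h]; simp
        · exact h
      have ht1 : t < 1 := by
        nlinarith
      have hconv : ‖a + t • (x - a) - c‖ ≤ (1 - t) * ‖a - c‖ + t * ‖x - c‖ := by
        have heq : a + t • (x - a) - c = (1 - t) • (a - c) + t • (x - c) := by
          module
        rw [heq]
        calc ‖(1 - t) • (a - c) + t • (x - c)‖
            ≤ ‖(1 - t) • (a - c)‖ + ‖t • (x - c)‖ := norm_add_le _ _
          _ = (1 - t) * ‖a - c‖ + t * ‖x - c‖ := by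
              rw [norm_smul, norm_smul, Real.norm_of_nonneg (by linarith : (0:ℝ) ≤ 1 - t),
                Real.norm_of_nonneg ht0]
      rw [hynorm] at hlt
      have k1 : t * ‖x - a‖ ≤ t * (‖x - c‖ + ‖a - c‖) :=
        mul_le_mul_of_nonneg_left hxa_ub ht0
      have k2 : t * ‖x - c‖ ≤ t * (d/2) := mul_le_mul_of_nonneg_left hxc ht0
      nlinarith [mul_pos ht0' hd, mul_nonneg ht0'.le (sub_nonneg.2 hdac)]
end

section
/- Let E be a real topological vector space, ℓ : E → ℝ a nonzero continuous linear functional, a₁ ∈ E, and C a cone with vertex a₁ over a bounded convex set 𝔛 with ℓ(x) > ℓ(a₁) for all x ∈ 𝔛. For d > 0, the truncated cone C ∩ {x | ℓ(x) ≤ ℓ(a₁) + d} is bounded. -/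
set_option maxHeartbeats 800000

open Bornology Set Pointwise

/-- A "bounded dilate" of a von Neumann bounded set is bounded. -/
lemma aux_smul_bounded {E : Type*} [AddCommGroup E] [Module ℝ E]
    [TopologicalSpace E] [IsTopologicalAddGroup E] [ContinuousSMul ℝ E]
    {s : Set E} (hs : IsVonNBounded ℝ s) (M : ℝ) :
    IsVonNBounded ℝ {y : E | ∃ t : ℝ, |t| ≤ M ∧ ∃ x ∈ s, y = t • x} := by
  intro V hV
  obtain ⟨W, ⟨hW0, hWbal⟩, hWV⟩ := (nhds_basis_balanced ℝ E).mem_iff.mp hV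
  obtain ⟨r, hr⟩ := absorbs_iff_norm.mp (hs hW0)
  set c₀ : ℝ := max r 1 with hc₀
  have hc₀1 : (1 : ℝ) ≤ c₀ := le_max_right _ _
  have hc₀pos : (0 : ℝ) < c₀ := lt_of_lt_of_le one_pos hc₀1
  have hsub : s ⊆ c₀ • W := hr c₀ (by rw [Real.norm_eq_abs, abs_of_pos hc₀pos]; exact le_max_left _ _)
  rw [absorbs_iff_norm]
  refine ⟨(M + 1) * c₀, fun c hc => ?_⟩
  rintro _ ⟨t, ht, x, hx, rfl⟩
  have hcpos : (0 : ℝ) < ‖c‖ := lt_of_lt_of_le (by nlinarith [le_trans (abs_nonneg t) ht]) hc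
  have hcne : c ≠ 0 := by
    intro h; rw [h] at hcpos; simp at hcpos
  obtain ⟨w, hw, rfl⟩ := hsub hx
  have : t • c₀ • w = c • (((t * c₀) / c) • w) := by
    rw [smul_smul, smul_smul]; congr 1; field_simp
  rw [this]
  refine Set.smul_mem_smul_set (hWV (hWbal _ ?_ (Set.smul_mem_smul_set hw)))
  rw [norm_div]
  rw [div_le_one hcpos]
  have h1 : ‖t * c₀‖ ≤ M * c₀ := by
    rw [norm_mul]
    have : ‖t‖ ≤ M := ht
    have : ‖(c₀ : ℝ)‖ = c₀ := abs_of_pos hc₀pos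
    rw [this]
    exact mul_le_mul_of_nonneg_right ht hc₀pos.le
  calc ‖t * c₀‖ ≤ M * c₀ := h1
    _ ≤ (M + 1) * c₀ := by nlinarith
    _ ≤ ‖c‖ := hc

theorem truncated_cone_bounded {E : Type*} [AddCommGroup E] [Module ℝ E]
    [TopologicalSpace E] [IsTopologicalAddGroup E] [ContinuousSMul ℝ E]
    (l : E →L[ℝ] ℝ) (hl : l ≠ 0) (a₁ : E)
    (𝔛 : Set E) (h𝔛conv : Convex ℝ 𝔛) (h𝔛bdd : Bornology.IsVonNBounded ℝ 𝔛)
    (β : ℝ) (hβ : 0 < β) (hlow : ∀ x ∈ 𝔛, l a₁ + β ≤ l x)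
    (d : ℝ) (hd : 0 < d) :
    Bornology.IsVonNBounded ℝ
      ({y : E | ∃ x ∈ 𝔛, ∃ t : ℝ, 0 ≤ t ∧ y = a₁ + t • (x - a₁)} ∩
        {x : E | l x ≤ l a₁ + d}) := by
  have hsub : IsVonNBounded ℝ (𝔛 - {a₁}) := h𝔛bdd.sub (Bornology.isVonNBounded_singleton a₁)
  have hT := aux_smul_bounded hsub (d / β)
  have hA : IsVonNBounded ℝ
      ({a₁} + {y : E | ∃ t : ℝ, |t| ≤ d / β ∧ ∃ x ∈ 𝔛 - {a₁}, y = t • x}) :=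
    (Bornology.isVonNBounded_singleton a₁).add hT
  refine hA.subset ?_
  rintro y ⟨⟨x, hx, t, ht0, rfl⟩, hy⟩
  refine ⟨a₁, rfl, t • (x - a₁), ⟨t, ?_, x - a₁, ?_, rfl⟩, rfl⟩
  · -- t ≤ d/β
    rw [abs_of_nonneg ht0]
    have hly : l (a₁ + t • (x - a₁)) = l a₁ + t * (l x - l a₁) := by
      simp [map_add, map_smul, mul_comm, mul_sub]
    simp only [Set.mem_setOf_eq, hly] at hy
    have hβx : β ≤ l x - l a₁ := by have := hlow x hx; linarith
    have h1 : t * β ≤ t * (l x - l a₁) := mul_le_mul_of_nonneg_left hβx ht0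
    have h2 : t * (l x - l a₁) ≤ d := by linarith
    rw [le_div_iff₀ hβ]
    linarith
  · exact ⟨x, hx, a₁, rfl, rfl⟩
end

section
/- The Lie algebra generated by the four vector fields cos θ ∂_θ, sin θ ∂_θ, cos 2θ ∂_θ, sin 2θ ∂_θ inside Vec(S¹) (with bracket [v, ω] = v'ω - ω'v) contains ∂_θ and cos nθ ∂_θ, sin nθ ∂_θ for every natural number n ≥ 1; in particular its closure spans a dense subspace of Vec(S¹). -/
/-- The Lie bracket on vector fields on the circle, viewed as functions,
`[v, ω] = v'ω - ω'v`. -/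
noncomputable def vfBracket (v w : ℝ → ℝ) : ℝ → ℝ :=
  fun θ => deriv v θ * w θ - deriv w θ * v θ

/-- The generating set `{cos θ, sin θ, cos 2θ, sin 2θ}`. -/
noncomputable def genSet : Set (ℝ → ℝ) :=
  {fun θ => Real.cos θ, fun θ => Real.sin θ,
   fun θ => Real.cos (2 * θ), fun θ => Real.sin (2 * θ)}

/-- The Lie algebra generated by `genSet`: the smallest linear subspace of functions
containing `genSet` and closed under the bracket. -/
noncomputable def generatedLieAlgebra : Submodule ℝ (ℝ → ℝ) :=
  sInf {L : Submodule ℝ (ℝ → ℝ) |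
    genSet ⊆ (L : Set (ℝ → ℝ)) ∧ ∀ v ∈ L, ∀ w ∈ L, vfBracket v w ∈ L}

noncomputable def Cc (a : ℝ) : ℝ → ℝ := fun θ => Real.cos (a * θ)
noncomputable def Ss (a : ℝ) : ℝ → ℝ := fun θ => Real.sin (a * θ)

lemma hasDerivAt_Cc (a θ : ℝ) : HasDerivAt (Cc a) (-(a * Real.sin (a * θ))) θ := by
  have h := (Real.hasDerivAt_cos (a * θ)).comp θ ((hasDerivAt_id θ).const_mul a)
  unfold Cc
  simpa [Cc, Function.comp_def, mul_comm] using h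

lemma hasDerivAt_Ss (a θ : ℝ) : HasDerivAt (Ss a) (a * Real.cos (a * θ)) θ := by
  have h := (Real.hasDerivAt_sin (a * θ)).comp θ ((hasDerivAt_id θ).const_mul a)
  unfold Ss
  simpa [Ss, Function.comp_def, mul_comm] using h

lemma brCC (a b : ℝ) : vfBracket (Cc a) (Cc b) =
    fun θ => ((b - a) / 2) * Real.sin ((a + b) * θ) - ((a + b) / 2) * Real.sin ((a - b) * θ) := by
  funext θ
  rw [vfBracket, (hasDerivAt_Cc a θ).deriv, (hasDerivAt_Cc b θ).deriv]
  rw [show (a + b) * θ = a * θ + b * θ by ring, show (a - b) * θ = a * θ - b * θ by ring,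
    Real.sin_add, Real.sin_sub]
  simp only [Cc]; ring

lemma brCS (a b : ℝ) : vfBracket (Cc a) (Ss b) =
    fun θ => ((a - b) / 2) * Real.cos ((a + b) * θ) - ((a + b) / 2) * Real.cos ((a - b) * θ) := by
  funext θ
  rw [vfBracket, (hasDerivAt_Cc a θ).deriv, (hasDerivAt_Ss b θ).deriv]
  rw [show (a + b) * θ = a * θ + b * θ by ring, show (a - b) * θ = a * θ - b * θ by ring,
    Real.cos_add, Real.cos_sub]
  simp only [Cc, Ss]; ring


lemma stepS (L : Submodule ℝ (ℝ → ℝ))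
    (hbr : ∀ v ∈ L, ∀ w ∈ L, vfBracket v w ∈ L)
    (m : ℝ) (hm : 2 ≤ m) (h1c : Cc 1 ∈ L)
    (hc : Cc m ∈ L) (hs' : Ss (m - 1) ∈ L) : Ss (m + 1) ∈ L := by
  have hne : (1 : ℝ) - m ≠ 0 := by intro h; linarith
  have key : Ss (m + 1) = (2 / (1 - m)) • vfBracket (Cc m) (Cc 1) +
      ((m + 1) / (1 - m)) • Ss (m - 1) := by
    rw [brCC]
    funext θ
    simp only [Pi.add_apply, Pi.smul_apply, smul_eq_mul, Ss]
    field_simp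
    ring
  rw [key]
  exact L.add_mem (L.smul_mem _ (hbr _ hc _ h1c)) (L.smul_mem _ hs')

lemma stepC (L : Submodule ℝ (ℝ → ℝ))
    (hbr : ∀ v ∈ L, ∀ w ∈ L, vfBracket v w ∈ L)
    (m : ℝ) (hm : 2 ≤ m) (h1s : Ss 1 ∈ L)
    (hc : Cc m ∈ L) (hc' : Cc (m - 1) ∈ L) : Cc (m + 1) ∈ L := by
  have hne : m - 1 ≠ 0 := by intro h; linarith
  have key : Cc (m + 1) = (2 / (m - 1)) • vfBracket (Cc m) (Ss 1) +
      ((m + 1) / (m - 1)) • Cc (m - 1) := by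
    rw [brCS]
    funext θ
    simp only [Pi.add_apply, Pi.smul_apply, smul_eq_mul, Cc]
    field_simp
    ring
  rw [key]
  exact L.add_mem (L.smul_mem _ (hbr _ hc _ h1s)) (L.smul_mem _ hc')

section Main
variable (L : Submodule ℝ (ℝ → ℝ)) (hgen : genSet ⊆ (L : Set (ℝ → ℝ)))
  (hbr : ∀ v ∈ L, ∀ w ∈ L, vfBracket v w ∈ L)

include hgen in
lemma memC1 : Cc 1 ∈ L := by
  have : Cc 1 = (fun θ => Real.cos θ) := by funext θ; simp [Cc]
  rw [this]; exact hgen (Set.mem_insert _ _)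

include hgen in
lemma memS1 : Ss 1 ∈ L := by
  have : Ss 1 = (fun θ => Real.sin θ) := by funext θ; simp [Ss]
  rw [this]; exact hgen (Set.mem_insert_of_mem _ (Set.mem_insert _ _))

include hgen in
lemma memC2 : Cc 2 ∈ L :=
  hgen (Set.mem_insert_of_mem _ (Set.mem_insert_of_mem _ (Set.mem_insert _ _)))

include hgen in
lemma memS2 : Ss 2 ∈ L :=
  hgen (Set.mem_insert_of_mem _ (Set.mem_insert_of_mem _ (Set.mem_insert_of_mem _ rfl)))

include hgen hbr in
lemma memOne : (fun _ : ℝ => (1 : ℝ)) ∈ L := by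
  have key : (fun _ : ℝ => (1 : ℝ)) = (-1 : ℝ) • vfBracket (Cc 1) (Ss 1) := by
    rw [brCS]
    funext θ
    norm_num
  rw [key]
  exact L.smul_mem _ (hbr _ (memC1 L hgen) _ (memS1 L hgen))

include hgen hbr in
lemma memAll : ∀ n : ℕ, Cc ((n : ℝ) + 1) ∈ L ∧ Ss ((n : ℝ) + 1) ∈ L := by
  have h1c := memC1 L hgen
  have h1s := memS1 L hgen
  have key : ∀ n : ℕ, (Cc ((n : ℝ) + 1) ∈ L ∧ Ss ((n : ℝ) + 1) ∈ L) ∧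
      (Cc ((n : ℝ) + 2) ∈ L ∧ Ss ((n : ℝ) + 2) ∈ L) := by
    intro n
    induction n with
    | zero =>
      refine ⟨⟨by simpa using h1c, by simpa using h1s⟩, ?_, ?_⟩
      · simpa using memC2 L hgen
      · simpa using memS2 L hgen
    | succ k ih =>
      obtain ⟨⟨hck, hsk⟩, hck', hsk'⟩ := ih
      have hm : (2 : ℝ) ≤ (k : ℝ) + 2 := by linarith [Nat.cast_nonneg (α := ℝ) k]
      have hC := stepC L hbr ((k : ℝ) + 2) hm h1s hck'
        (by rw [show (k : ℝ) + 2 - 1 = (k : ℝ) + 1 by ring]; exact hck)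
      have hS := stepS L hbr ((k : ℝ) + 2) hm h1c hck'
        (by rw [show (k : ℝ) + 2 - 1 = (k : ℝ) + 1 by ring]; exact hsk)
      refine ⟨⟨?_, ?_⟩, ?_, ?_⟩
      · rw [show ((k+1:ℕ):ℝ) + 1 = (k:ℝ) + 2 by push_cast; ring]; exact hck'
      · rw [show ((k+1:ℕ):ℝ) + 1 = (k:ℝ) + 2 by push_cast; ring]; exact hsk'
      · rw [show ((k+1:ℕ):ℝ) + 2 = (k:ℝ) + 2 + 1 by push_cast; ring]; exact hC
      · rw [show ((k+1:ℕ):ℝ) + 2 = (k:ℝ) + 2 + 1 by push_cast; ring]; exact hS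
  exact fun n => (key n).1

end Main

noncomputable def trigSet : Set (ℝ → ℝ) :=
  (Set.range fun n : ℕ => Cc (n : ℝ)) ∪ Set.range fun n : ℕ => Ss (n : ℝ)

noncomputable def V : Submodule ℝ (ℝ → ℝ) := Submodule.span ℝ trigSet

lemma Cc_neg (a : ℝ) : Cc (-a) = Cc a := by
  funext θ; simp [Cc]

lemma Ss_neg (a : ℝ) : Ss (-a) = -Ss a := by
  funext θ; simp [Ss]

lemma Cc_int_mem (k : ℤ) : Cc (k : ℝ) ∈ V := by
  rcases Int.natAbs_eq k with h | h
  · rw [h, Int.cast_natCast]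
    exact Submodule.subset_span (Or.inl ⟨k.natAbs, rfl⟩)
  · rw [h, Int.cast_neg, Int.cast_natCast, Cc_neg]
    exact Submodule.subset_span (Or.inl ⟨k.natAbs, rfl⟩)

lemma Ss_int_mem (k : ℤ) : Ss (k : ℝ) ∈ V := by
  rcases Int.natAbs_eq k with h | h
  · rw [h, Int.cast_natCast]
    exact Submodule.subset_span (Or.inr ⟨k.natAbs, rfl⟩)
  · rw [h, Int.cast_neg, Int.cast_natCast, Ss_neg]
    exact V.neg_mem (Submodule.subset_span (Or.inr ⟨k.natAbs, rfl⟩))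

lemma Cc_mul_Cc (a b : ℝ) :
    Cc a * Cc b = (1 / 2 : ℝ) • Cc (a + b) + (1 / 2 : ℝ) • Cc (a - b) := by
  funext θ
  simp only [Pi.mul_apply, Pi.add_apply, Pi.smul_apply, smul_eq_mul, Cc]
  rw [show (a + b) * θ = a * θ + b * θ by ring, show (a - b) * θ = a * θ - b * θ by ring,
    Real.cos_add, Real.cos_sub]
  ring

lemma Ss_mul_Ss (a b : ℝ) :
    Ss a * Ss b = (1 / 2 : ℝ) • Cc (a - b) - (1 / 2 : ℝ) • Cc (a + b) := by
  funext θ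
  simp only [Pi.mul_apply, Pi.sub_apply, Pi.smul_apply, smul_eq_mul, Cc, Ss]
  rw [show (a + b) * θ = a * θ + b * θ by ring, show (a - b) * θ = a * θ - b * θ by ring,
    Real.cos_add, Real.cos_sub]
  ring

lemma Cc_mul_Ss (a b : ℝ) :
    Cc a * Ss b = (1 / 2 : ℝ) • Ss (a + b) - (1 / 2 : ℝ) • Ss (a - b) := by
  funext θ
  simp only [Pi.mul_apply, Pi.sub_apply, Pi.smul_apply, smul_eq_mul, Cc, Ss]
  rw [show (a + b) * θ = a * θ + b * θ by ring, show (a - b) * θ = a * θ - b * θ by ring,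
    Real.sin_add, Real.sin_sub]
  ring

lemma gen_mul_gen {f g : ℝ → ℝ} (hf : f ∈ trigSet) (hg : g ∈ trigSet) : f * g ∈ V := by
  have hint : ∀ a b : ℕ, Cc ((a : ℝ) + b) ∈ V ∧ Cc ((a : ℝ) - b) ∈ V ∧
      Ss ((a : ℝ) + b) ∈ V ∧ Ss ((a : ℝ) - b) ∈ V := by
    intro a b
    refine ⟨?_, ?_, ?_, ?_⟩
    · simpa using Cc_int_mem ((a : ℤ) + b)
    · simpa using Cc_int_mem ((a : ℤ) - b)
    · simpa using Ss_int_mem ((a : ℤ) + b)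
    · simpa using Ss_int_mem ((a : ℤ) - b)
  rcases hf with ⟨a, rfl⟩ | ⟨a, rfl⟩ <;> rcases hg with ⟨b, rfl⟩ | ⟨b, rfl⟩
  · rw [Cc_mul_Cc]
    exact V.add_mem (V.smul_mem _ (hint a b).1) (V.smul_mem _ (hint a b).2.1)
  · rw [Cc_mul_Ss]
    exact V.sub_mem (V.smul_mem _ (hint a b).2.2.1) (V.smul_mem _ (hint a b).2.2.2)
  · rw [mul_comm, Cc_mul_Ss]
    exact V.sub_mem (V.smul_mem _ (hint b a).2.2.1) (V.smul_mem _ (hint b a).2.2.2)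
  · rw [Ss_mul_Ss]
    exact V.sub_mem (V.smul_mem _ (hint a b).2.1) (V.smul_mem _ (hint a b).1)

lemma mul_mem_V {f g : ℝ → ℝ} (hf : f ∈ V) (hg : g ∈ V) : f * g ∈ V := by
  induction hf using Submodule.span_induction with
  | mem x hx =>
    induction hg using Submodule.span_induction with
    | mem y hy => exact gen_mul_gen hx hy
    | zero => simpa using V.zero_mem
    | add y z _ _ ihy ihz => rw [mul_add]; exact V.add_mem ihy ihz
    | smul c y _ ihy => rw [mul_smul_comm]; exact V.smul_mem _ ihy
  | zero => simpa using V.zero_mem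
  | add y z _ _ ihy ihz => rw [add_mul]; exact V.add_mem ihy ihz
  | smul c y _ ihy => rw [smul_mul_assoc]; exact V.smul_mem _ ihy

lemma one_mem_V : (1 : ℝ → ℝ) ∈ V := by
  have : (1 : ℝ → ℝ) = Cc ((0 : ℕ) : ℝ) := by funext θ; simp [Cc]
  rw [this]; exact Submodule.subset_span (Or.inl ⟨0, rfl⟩)

open Real

noncomputable def angleCos : C(Real.Angle, ℝ) := ⟨Real.Angle.cos, Real.Angle.continuous_cos⟩
noncomputable def angleSin : C(Real.Angle, ℝ) := ⟨Real.Angle.sin, Real.Angle.continuous_sin⟩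

noncomputable def A : Subalgebra ℝ C(Real.Angle, ℝ) :=
  Algebra.adjoin ℝ {angleCos, angleSin}

lemma A_separates : A.SeparatesPoints := by
  intro x y hxy
  induction x using QuotientAddGroup.induction_on with | H a =>
  induction y using QuotientAddGroup.induction_on with | H b =>
  by_cases hc : Real.cos a = Real.cos b
  · by_cases hs : Real.sin a = Real.sin b
    · exact absurd (Real.Angle.cos_sin_inj hc hs) hxy
    · exact ⟨_, ⟨angleSin, Algebra.subset_adjoin (Or.inr rfl), rfl⟩, by
        show Real.Angle.sin (a : Real.Angle) ≠ Real.Angle.sin (b : Real.Angle)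
        rw [Real.Angle.sin_coe, Real.Angle.sin_coe]; exact hs⟩
  · exact ⟨_, ⟨angleCos, Algebra.subset_adjoin (Or.inl rfl), rfl⟩, by
      show Real.Angle.cos (a : Real.Angle) ≠ Real.Angle.cos (b : Real.Angle)
      rw [Real.Angle.cos_coe, Real.Angle.cos_coe]; exact hc⟩

lemma pull_mem_V {g : C(Real.Angle, ℝ)} (hg : g ∈ A) :
    (fun θ : ℝ => g (θ : Real.Angle)) ∈ V := by
  induction hg using Algebra.adjoin_induction with
  | mem x hx =>
    rcases hx with rfl | rfl
    · have : (fun θ : ℝ => angleCos (θ : Real.Angle)) = Cc ((1 : ℕ) : ℝ) := by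
        funext θ; simp [angleCos, Real.Angle.cos_coe, Cc]
      rw [this]; exact Submodule.subset_span (Or.inl ⟨1, rfl⟩)
    · have : (fun θ : ℝ => angleSin (θ : Real.Angle)) = Ss ((1 : ℕ) : ℝ) := by
        funext θ; simp [angleSin, Real.Angle.sin_coe, Ss]
      rw [this]; exact Submodule.subset_span (Or.inr ⟨1, rfl⟩)
  | algebraMap r =>
    have : (fun θ : ℝ => (algebraMap ℝ C(Real.Angle, ℝ) r) (θ : Real.Angle))
        = r • (1 : ℝ → ℝ) := by
      funext θ; simp [Algebra.algebraMap_eq_smul_one]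
    rw [this]; exact V.smul_mem _ one_mem_V
  | add x y _ _ ihx ihy =>
    have : (fun θ : ℝ => (x + y) (θ : Real.Angle)) =
        (fun θ : ℝ => x (θ : Real.Angle)) + fun θ : ℝ => y (θ : Real.Angle) := rfl
    rw [this]; exact V.add_mem ihx ihy
  | mul x y _ _ ihx ihy =>
    have : (fun θ : ℝ => (x * y) (θ : Real.Angle)) =
        (fun θ : ℝ => x (θ : Real.Angle)) * fun θ : ℝ => y (θ : Real.Angle) := rfl
    rw [this]; exact mul_mem_V ihx ihy

lemma density (f : ℝ → ℝ) (hf : Continuous f) (hper : ∀ x, f (x + 2 * Real.pi) = f x)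
    (ε : ℝ) (hε : 0 < ε) :
    ∃ g : ℝ → ℝ, g ∈ V ∧ ∀ x : ℝ, |f x - g x| < ε := by
  haveI : Fact (0 < 2 * π) := ⟨by positivity⟩
  haveI : CompactSpace Real.Angle := inferInstanceAs (CompactSpace (AddCircle (2 * π)))
  have hp : Function.Periodic f (2 * π) := hper
  set F : Real.Angle → ℝ := hp.lift with hF
  have hFc : Continuous F := hf.quotient_liftOn' _
  obtain ⟨g, hg⟩ := ContinuousMap.exists_mem_subalgebra_near_continuous_of_separatesPoints
    A A_separates F hFc ε hε
  refine ⟨fun θ : ℝ => (g : C(Real.Angle, ℝ)) (θ : Real.Angle), pull_mem_V g.2, fun x => ?_⟩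
  have h1 : F (x : Real.Angle) = f x := hp.lift_coe x
  have := hg (x : Real.Angle)
  rw [h1] at this
  simpa [abs_sub_comm] using this

lemma memGen_one : (fun _ : ℝ => (1 : ℝ)) ∈ generatedLieAlgebra :=
  Submodule.mem_sInf.2 fun L hL => memOne L hL.1 hL.2

lemma memGen_all (n : ℕ) :
    Cc ((n : ℝ) + 1) ∈ generatedLieAlgebra ∧ Ss ((n : ℝ) + 1) ∈ generatedLieAlgebra :=
  ⟨Submodule.mem_sInf.2 fun L hL => (memAll L hL.1 hL.2 n).1,
   Submodule.mem_sInf.2 fun L hL => (memAll L hL.1 hL.2 n).2⟩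

lemma V_le : V ≤ generatedLieAlgebra := by
  rw [V, Submodule.span_le]
  rintro f (⟨n, rfl⟩ | ⟨n, rfl⟩)
  · show Cc ((n : ℕ) : ℝ) ∈ generatedLieAlgebra
    cases n with
    | zero =>
      have : Cc ((0 : ℕ) : ℝ) = fun _ : ℝ => (1 : ℝ) := by funext θ; simp [Cc]
      rw [this]; exact memGen_one
    | succ k =>
      have : ((k + 1 : ℕ) : ℝ) = (k : ℝ) + 1 := by push_cast; ring
      rw [this]; exact (memGen_all k).1
  · show Ss ((n : ℕ) : ℝ) ∈ generatedLieAlgebra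
    cases n with
    | zero =>
      have : Ss ((0 : ℕ) : ℝ) = (0 : ℝ → ℝ) := by funext θ; simp [Ss]
      rw [this]; exact generatedLieAlgebra.zero_mem
    | succ k =>
      have : ((k + 1 : ℕ) : ℝ) = (k : ℝ) + 1 := by push_cast; ring
      rw [this]; exact (memGen_all k).2

theorem generated_algebra_contains_trig_and_is_dense :
    ((fun _ : ℝ => (1 : ℝ)) ∈ generatedLieAlgebra) ∧
      (∀ n : ℕ, 1 ≤ n →
        (fun θ : ℝ => Real.cos (n * θ)) ∈ generatedLieAlgebra ∧
        (fun θ : ℝ => Real.sin (n * θ)) ∈ generatedLieAlgebra) ∧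
      (∀ f : ℝ → ℝ, Continuous f → (∀ x, f (x + 2 * Real.pi) = f x) →
        ∀ ε : ℝ, 0 < ε → ∃ g ∈ generatedLieAlgebra, ∀ x : ℝ, |f x - g x| < ε) := by
  refine ⟨memGen_one, ?_, ?_⟩
  · intro n hn
    obtain ⟨k, rfl⟩ := Nat.exists_eq_add_of_le hn
    have e : ((1 + k : ℕ) : ℝ) = (k : ℝ) + 1 := by push_cast; ring
    constructor
    · show Cc ((1 + k : ℕ) : ℝ) ∈ generatedLieAlgebra
      rw [e]; exact (memGen_all k).1
    · show Ss ((1 + k : ℕ) : ℝ) ∈ generatedLieAlgebra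
      rw [e]; exact (memGen_all k).2
  · intro f hf hper ε hε
    obtain ⟨g, hgV, hg⟩ := density f hf hper ε hε
    exact ⟨g, V_le hgV, hg⟩
end
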